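/- For real p, q, r > 1 with p + q + r > 4, the sum over n ≥ 1 of (ζ(p) − Σ_{i=1}^n 1/i^p)(ζ(q) − Σ_{j=1}^n 1/j^q)(ζ(r) − Σ_{k=1}^n 1/k^r) equals ζ(p,q,r−1) + ζ(p,r,q−1) + ζ(q,p,r−1) + ζ(q,r,p−1) + ζ(r,p,q−1) + ζ(r,q,p−1) + ζ(p+q,r−1) + ζ(p+r,q−1) + ζ(q+r,p−1) + ζ(p,q+r−1) + ζ(q,p+r−1) + ζ(r,p+q−1) + ζ(p+q+r−1) − ζ(p)ζ(q)ζ(r). -/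

import Mathlib

open scoped BigOperators

/-- Riemann zeta as a real series: `ζ(p) = Σ_{n≥1} 1/n^p`. -/
noncomputable def rzeta (p : ℝ) : ℝ := ∑' n : ℕ, 1 / (n + 1 : ℝ) ^ p

/-- Double zeta value `ζ(a,b) = Σ_{m>n≥1} 1/(m^a n^b)`. -/
noncomputable def zeta2 (a b : ℝ) : ℝ :=
  ∑' q : {q : ℕ × ℕ // q.2 < q.1 ∧ 0 < q.2},
    1 / ((q.1.1 : ℝ) ^ a * (q.1.2 : ℝ) ^ b)

/-- Triple zeta value `ζ(a,b,c) = Σ_{l>m>n≥1} 1/(l^a m^b n^c)`. -/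
noncomputable def zeta3 (a b c : ℝ) : ℝ :=
  ∑' t : {t : ℕ × ℕ × ℕ // t.2.1 < t.1 ∧ t.2.2 < t.2.1 ∧ 0 < t.2.2},
    1 / ((t.1.1 : ℝ) ^ a * (t.1.2.1 : ℝ) ^ b * (t.1.2.2 : ℝ) ^ c)

/-- Tail of the zeta series: `ζ(p) − Σ_{i=1}^n 1/i^p`. -/
noncomputable def zetaTail (p : ℝ) (n : ℕ) : ℝ :=
  rzeta p - ∑ i ∈ Finset.range n, 1 / (i + 1 : ℝ) ^ p

/-- Polylogarithm `Li_p(z) = Σ_{j≥1} z^j / j^p`. -/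
noncomputable def polyLog (p : ℝ) (z : ℝ) : ℝ :=
  ∑' j : ℕ, z ^ (j + 1) / (j + 1 : ℝ) ^ p


noncomputable def EE (s : ℝ) (n : ℕ) : ENNReal := ENNReal.ofReal (1 / ((n : ℝ) + 1) ^ s)

lemma EE_ne_top (s : ℝ) (n : ℕ) : EE s n ≠ ⊤ := ENNReal.ofReal_ne_top

lemma npos (n : ℕ) : (0:ℝ) < (n:ℝ) + 1 := by positivity

lemma EE_mul (s t : ℝ) (n : ℕ) : EE s n * EE t n = EE (s + t) n := by
  unfold EE
  rw [← ENNReal.ofReal_mul (by positivity)]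
  congr 1
  rw [Real.rpow_add (npos n)]
  field_simp

lemma EE_key (s : ℝ) (n : ℕ) : ((n : ENNReal) + 1) * EE s n = EE (s - 1) n := by
  unfold EE
  have : ((n : ENNReal) + 1) = ENNReal.ofReal ((n:ℝ) + 1) := by
    rw [ENNReal.ofReal_add (by positivity) zero_le_one]
    simp [ENNReal.ofReal_natCast]
  rw [this, ← ENNReal.ofReal_mul (by positivity)]
  congr 1
  rw [Real.rpow_sub (npos n), Real.rpow_one]
  field_simp

lemma EE_shift (s a : ℝ) (n : ℕ) :
    ENNReal.ofReal (((n:ℝ) + 1) ^ a) * EE s n = EE (s - a) n := by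
  unfold EE
  rw [← ENNReal.ofReal_mul (by positivity)]
  congr 1
  rw [Real.rpow_sub (npos n)]
  field_simp

lemma summable_base {s : ℝ} (hs : 1 < s) : Summable (fun n : ℕ => 1 / ((n : ℝ) + 1) ^ s) := by
  have h := (Real.summable_one_div_nat_rpow (p := s)).mpr hs
  have h2 := (summable_nat_add_iff 1).mpr h
  apply h2.congr
  intro n
  push_cast
  ring


lemma Z1E_eq {s : ℝ} (hs : 1 < s) :
    ∑' n : ℕ, EE s n = ENNReal.ofReal (rzeta s) := by
  rw [rzeta, ENNReal.ofReal_tsum_of_nonneg (fun n => by positivity) (summable_base hs)]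
  exact tsum_congr fun n => rfl

lemma Z1E_ne_top {s : ℝ} (hs : 1 < s) : ∑' n : ℕ, EE s n ≠ ⊤ := by
  rw [Z1E_eq hs]; exact ENNReal.ofReal_ne_top

lemma rzeta_eq (s : ℝ) : rzeta s = (∑' n : ℕ, EE s n).toReal := by
  rw [ENNReal.tsum_toReal_eq (fun n => EE_ne_top s n), rzeta]
  exact tsum_congr fun n => (ENNReal.toReal_ofReal (by positivity)).symm

lemma zetaTail_eq {s : ℝ} (hs : 1 < s) (m : ℕ) :
    zetaTail s m = ∑' i : ℕ, 1 / (((i + m : ℕ) : ℝ) + 1) ^ s := by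
  have h := Summable.sum_add_tsum_nat_add (f := fun n : ℕ => 1 / ((n : ℝ) + 1) ^ s) m (summable_base hs)
  rw [zetaTail, rzeta]
  linarith [h]

lemma zetaTail_nonneg {s : ℝ} (hs : 1 < s) (m : ℕ) : 0 ≤ zetaTail s m := by
  rw [zetaTail_eq hs m]
  exact tsum_nonneg fun i => by positivity

lemma ofReal_zetaTail {s : ℝ} (hs : 1 < s) (m : ℕ) :
    ENNReal.ofReal (zetaTail s m) = ∑' i : ℕ, EE s (i + m) := by
  rw [zetaTail_eq hs m,
    ENNReal.ofReal_tsum_of_nonneg (fun i => by positivity)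
      ((summable_nat_add_iff m).mpr (summable_base hs))]
  exact tsum_congr fun i => rfl

lemma tsum3 (f g h : ℕ → ENNReal) :
    (∑' a, f a) * (∑' b, g b) * (∑' c, h c)
      = ∑' x : ℕ × ℕ × ℕ, f x.1 * g x.2.1 * h x.2.2 := by
  have h2 : (∑' y : ℕ × ℕ, g y.1 * h y.2) = (∑' b, g b) * (∑' c, h c) := by
    rw [ENNReal.tsum_prod']
    simp_rw [ENNReal.tsum_mul_left]
    rw [ENNReal.tsum_mul_right]
  rw [mul_assoc, ← h2, ← ENNReal.tsum_mul_right (f := f)]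
  conv_rhs => rw [ENNReal.tsum_prod']
  refine tsum_congr fun a => ?_
  rw [← ENNReal.tsum_mul_left]
  exact tsum_congr fun y => by ring

noncomputable def Z3E (a b c : ℝ) : ENNReal :=
  ∑' x : ℕ × ℕ × ℕ,
    if x.2.1 < x.1 ∧ x.2.2 < x.2.1 then EE a x.1 * EE b x.2.1 * EE c x.2.2 else 0

noncomputable def Z2E (a b : ℝ) : ENNReal :=
  ∑' x : ℕ × ℕ, if x.2 < x.1 then EE a x.1 * EE b x.2 else 0

lemma zeta3_eq (a b c : ℝ) : zeta3 a b c = (Z3E a b c).toReal := by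
  classical
  set F : ℕ × ℕ × ℕ → ENNReal := fun y =>
    if y.2.1 < y.1 ∧ y.2.2 < y.2.1 ∧ 0 < y.2.2 then
      ENNReal.ofReal (1 / ((y.1 : ℝ) ^ a * (y.2.1 : ℝ) ^ b * (y.2.2 : ℝ) ^ c)) else 0
    with hF
  have step1 : zeta3 a b c =
      (∑' t : {t : ℕ × ℕ × ℕ // t.2.1 < t.1 ∧ t.2.2 < t.2.1 ∧ 0 < t.2.2},
        ENNReal.ofReal (1 / ((t.1.1 : ℝ) ^ a * (t.1.2.1 : ℝ) ^ b * (t.1.2.2 : ℝ) ^ c))).toReal := by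
    rw [ENNReal.tsum_toReal_eq (fun t => ENNReal.ofReal_ne_top), zeta3]
    exact tsum_congr fun t => (ENNReal.toReal_ofReal (by positivity)).symm
  have step2 : (∑' t : {t : ℕ × ℕ × ℕ // t.2.1 < t.1 ∧ t.2.2 < t.2.1 ∧ 0 < t.2.2},
        ENNReal.ofReal (1 / ((t.1.1 : ℝ) ^ a * (t.1.2.1 : ℝ) ^ b * (t.1.2.2 : ℝ) ^ c)))
      = ∑' y : ℕ × ℕ × ℕ, F y := by
    have h := tsum_subtype (s := {y : ℕ × ℕ × ℕ | y.2.1 < y.1 ∧ y.2.2 < y.2.1 ∧ 0 < y.2.2})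
      (f := fun y : ℕ × ℕ × ℕ =>
        ENNReal.ofReal (1 / ((y.1 : ℝ) ^ a * (y.2.1 : ℝ) ^ b * (y.2.2 : ℝ) ^ c)))
    refine h.trans (tsum_congr fun y => ?_)
    simp [hF, Set.indicator_apply, Set.mem_setOf_eq]
  have step4 : ∀ u v w : ℕ, F (u + 1, v + 1, w + 1)
      = (if v < u ∧ w < v then EE a u * EE b v * EE c w else 0) := by
    intro u v w
    show (if v + 1 < u + 1 ∧ w + 1 < v + 1 ∧ 0 < w + 1 then
      ENNReal.ofReal (1 / (((u : ℕ) + 1 : ℕ) ^ a * (((v : ℕ) + 1 : ℕ) : ℝ) ^ b *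
        (((w : ℕ) + 1 : ℕ) : ℝ) ^ c)) else 0) = _
    by_cases hc : v < u ∧ w < v
    · rw [if_pos (by omega), if_pos hc]
      unfold EE
      rw [← ENNReal.ofReal_mul (by positivity), ← ENNReal.ofReal_mul (by positivity)]
      congr 1
      push_cast
      ring
    · rw [if_neg (by omega), if_neg hc]
  have sh3inj : Function.Injective (fun x : ℕ × ℕ × ℕ => (x.1 + 1, x.2.1 + 1, x.2.2 + 1)) := by
    intro x y hxy
    simp only [Prod.ext_iff] at hxy ⊢
    omega
  have step3 : (∑' x : ℕ × ℕ × ℕ, F (x.1 + 1, x.2.1 + 1, x.2.2 + 1)) = ∑' y, F y := by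
    refine Function.Injective.tsum_eq sh3inj ?_
    intro y hy
    have hc : y.2.1 < y.1 ∧ y.2.2 < y.2.1 ∧ 0 < y.2.2 := by
      by_contra hcon
      exact hy (by rw [hF]; simp only [if_neg hcon])
    exact ⟨(y.1 - 1, y.2.1 - 1, y.2.2 - 1), by simp only [Prod.ext_iff]; omega⟩
  rw [step1, step2, ← step3, Z3E]
  congr 1
  exact tsum_congr fun x => step4 x.1 x.2.1 x.2.2

lemma zeta2_eq (a b : ℝ) : zeta2 a b = (Z2E a b).toReal := by
  classical
  set F : ℕ × ℕ → ENNReal := fun y =>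
    if y.2 < y.1 ∧ 0 < y.2 then
      ENNReal.ofReal (1 / ((y.1 : ℝ) ^ a * (y.2 : ℝ) ^ b)) else 0
    with hF
  have step1 : zeta2 a b =
      (∑' t : {q : ℕ × ℕ // q.2 < q.1 ∧ 0 < q.2},
        ENNReal.ofReal (1 / ((t.1.1 : ℝ) ^ a * (t.1.2 : ℝ) ^ b))).toReal := by
    rw [ENNReal.tsum_toReal_eq (fun t => ENNReal.ofReal_ne_top), zeta2]
    exact tsum_congr fun t => (ENNReal.toReal_ofReal (by positivity)).symm
  have step2 : (∑' t : {q : ℕ × ℕ // q.2 < q.1 ∧ 0 < q.2},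
        ENNReal.ofReal (1 / ((t.1.1 : ℝ) ^ a * (t.1.2 : ℝ) ^ b)))
      = ∑' y : ℕ × ℕ, F y := by
    have h := tsum_subtype (s := {y : ℕ × ℕ | y.2 < y.1 ∧ 0 < y.2})
      (f := fun y : ℕ × ℕ => ENNReal.ofReal (1 / ((y.1 : ℝ) ^ a * (y.2 : ℝ) ^ b)))
    refine h.trans (tsum_congr fun y => ?_)
    simp [hF, Set.indicator_apply, Set.mem_setOf_eq]
  have step4 : ∀ u v : ℕ, F (u + 1, v + 1)
      = (if v < u then EE a u * EE b v else 0) := by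
    intro u v
    show (if v + 1 < u + 1 ∧ 0 < v + 1 then
      ENNReal.ofReal (1 / ((((u : ℕ) + 1 : ℕ) : ℝ) ^ a * (((v : ℕ) + 1 : ℕ) : ℝ) ^ b)) else 0) = _
    by_cases hc : v < u
    · rw [if_pos (by omega), if_pos hc]
      unfold EE
      rw [← ENNReal.ofReal_mul (by positivity)]
      congr 1
      push_cast
      ring
    · rw [if_neg (by omega), if_neg hc]
  have sh2inj : Function.Injective (fun x : ℕ × ℕ => (x.1 + 1, x.2 + 1)) := by
    intro x y hxy
    simp only [Prod.ext_iff] at hxy ⊢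
    omega
  have step3 : (∑' x : ℕ × ℕ, F (x.1 + 1, x.2 + 1)) = ∑' y, F y := by
    refine Function.Injective.tsum_eq sh2inj ?_
    intro y hy
    have hc : y.2 < y.1 ∧ 0 < y.2 := by
      by_contra hcon
      exact hy (by rw [hF]; simp only [if_neg hcon])
    exact ⟨(y.1 - 1, y.2 - 1), by simp only [Prod.ext_iff]; omega⟩
  rw [step1, step2, ← step3, Z2E]
  congr 1
  exact tsum_congr fun x => step4 x.1 x.2

lemma inner_eq (p q r : ℝ) (n : ℕ) :
    (∑' x : ℕ × ℕ × ℕ, EE p (x.1 + (n+1)) * EE q (x.2.1 + (n+1)) * EE r (x.2.2 + (n+1)))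
      = ∑' x : ℕ × ℕ × ℕ, if n < x.1 ∧ n < x.2.1 ∧ n < x.2.2 then
          EE p x.1 * EE q x.2.1 * EE r x.2.2 else 0 := by
  classical
  set g : ℕ × ℕ × ℕ → ENNReal := fun y =>
    if n < y.1 ∧ n < y.2.1 ∧ n < y.2.2 then EE p y.1 * EE q y.2.1 * EE r y.2.2 else 0 with hg
  have shinj : Function.Injective
      (fun x : ℕ × ℕ × ℕ => (x.1 + (n+1), x.2.1 + (n+1), x.2.2 + (n+1))) := by
    intro x y hxy
    simp only [Prod.ext_iff] at hxy ⊢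
    omega
  have step3 : (∑' x : ℕ × ℕ × ℕ, g (x.1 + (n+1), x.2.1 + (n+1), x.2.2 + (n+1))) = ∑' y, g y := by
    refine Function.Injective.tsum_eq shinj ?_
    intro y hy
    have hc : n < y.1 ∧ n < y.2.1 ∧ n < y.2.2 := by
      by_contra hcon
      exact hy (by rw [hg]; simp only [if_neg hcon])
    exact ⟨(y.1 - (n+1), y.2.1 - (n+1), y.2.2 - (n+1)), by simp only [Prod.ext_iff]; omega⟩
  have step4 : ∀ u v w : ℕ, g (u + (n+1), v + (n+1), w + (n+1))
      = EE p (u + (n+1)) * EE q (v + (n+1)) * EE r (w + (n+1)) := by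
    intro u v w
    show (if n < u + (n+1) ∧ n < v + (n+1) ∧ n < w + (n+1) then
      EE p (u + (n+1)) * EE q (v + (n+1)) * EE r (w + (n+1)) else 0) = _
    rw [if_pos (by omega)]
  rw [← step3]
  exact tsum_congr fun x => (step4 x.1 x.2.1 x.2.2).symm

lemma count_tsum (m : ℕ) (c : ENNReal) : (∑' n : ℕ, if n < m then c else 0) = (m : ENNReal) * c := by
  classical
  rw [tsum_eq_sum (s := Finset.range m) (fun b hb => if_neg (by simpa using hb))]
  rw [Finset.sum_congr rfl (fun i hi => if_pos (Finset.mem_range.mp hi)), Finset.sum_const,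
    Finset.card_range, nsmul_eq_mul]

lemma Lambda_eq (p q r : ℝ) :
    (∑' n : ℕ, ∑' x : ℕ × ℕ × ℕ,
        EE p (x.1 + (n+1)) * EE q (x.2.1 + (n+1)) * EE r (x.2.2 + (n+1)))
      = ∑' x : ℕ × ℕ × ℕ,
          ((min x.1 (min x.2.1 x.2.2) : ℕ) : ENNReal) * (EE p x.1 * EE q x.2.1 * EE r x.2.2) := by
  classical
  rw [tsum_congr (fun n => inner_eq p q r n)]
  rw [ENNReal.tsum_comm]
  refine tsum_congr fun x => ?_
  have h1 : ∀ n : ℕ, (if n < x.1 ∧ n < x.2.1 ∧ n < x.2.2 then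
      EE p x.1 * EE q x.2.1 * EE r x.2.2 else 0)
      = (if n < min x.1 (min x.2.1 x.2.2) then EE p x.1 * EE q x.2.1 * EE r x.2.2 else 0) := by
    intro n
    exact if_congr (by omega) rfl rfl
  rw [tsum_congr h1, count_tsum]
lemma pointwise (p q r : ℝ) (a b c : ℕ) :
    (((min a (min b c) : ℕ) : ENNReal) + 1) * (EE p a * EE q b * EE r c) =
      (if b < a ∧ c < b then EE p a * EE q b * EE (r-1) c else 0)
      + (if c < a ∧ b < c then EE p a * EE r c * EE (q-1) b else 0)
      + (if a < b ∧ c < a then EE q b * EE p a * EE (r-1) c else 0)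
      + (if c < b ∧ a < c then EE q b * EE r c * EE (p-1) a else 0)
      + (if a < c ∧ b < a then EE r c * EE p a * EE (q-1) b else 0)
      + (if b < c ∧ a < b then EE r c * EE q b * EE (p-1) a else 0)
      + (if a = b ∧ c < a then EE (p+q) a * EE (r-1) c else 0)
      + (if a = c ∧ b < a then EE (p+r) a * EE (q-1) b else 0)
      + (if b = c ∧ a < b then EE (q+r) b * EE (p-1) a else 0)
      + (if b = c ∧ b < a then EE p a * EE (q+r-1) b else 0)
      + (if a = c ∧ a < b then EE q b * EE (p+r-1) a else 0)
      + (if a = b ∧ a < c then EE r c * EE (p+q-1) a else 0)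
      + (if a = b ∧ b = c then EE (p+q+r-1) a else 0) := by
  rcases lt_trichotomy b a with h1 | h1 | h1 <;>
    rcases lt_trichotomy c b with h2 | h2 | h2 <;>
      rcases lt_trichotomy c a with h3 | h3 | h3
  · skip
    rw [if_pos (show b < a ∧ c < b by omega),
      if_neg (show ¬(c < a ∧ b < c) by omega),
      if_neg (show ¬(a < b ∧ c < a) by omega),
      if_neg (show ¬(c < b ∧ a < c) by omega),
      if_neg (show ¬(a < c ∧ b < a) by omega),
      if_neg (show ¬(b < c ∧ a < b) by omega),
      if_neg (show ¬(a = b ∧ c < a) by omega),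
      if_neg (show ¬(a = c ∧ b < a) by omega),
      if_neg (show ¬(b = c ∧ a < b) by omega),
      if_neg (show ¬(b = c ∧ b < a) by omega),
      if_neg (show ¬(a = c ∧ a < b) by omega),
      if_neg (show ¬(a = b ∧ a < c) by omega),
      if_neg (show ¬(a = b ∧ b = c) by omega)]
    rw [show (min a (min b c) : ℕ) = c by omega]
    simp only [add_zero, zero_add]
    simp only [← EE_mul, ← EE_key]
    all_goals ring
  · exact absurd h3 (by omega)
  · exact absurd h3 (by omega)
  · rw [h2]
    rw [if_neg (show ¬(b < a ∧ b < b) by omega),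
      if_neg (show ¬(b < a ∧ b < b) by omega),
      if_neg (show ¬(a < b ∧ b < a) by omega),
      if_neg (show ¬(b < b ∧ a < b) by omega),
      if_neg (show ¬(a < b ∧ b < a) by omega),
      if_neg (show ¬(b < b ∧ a < b) by omega),
      if_neg (show ¬(a = b ∧ b < a) by omega),
      if_neg (show ¬(a = b ∧ b < a) by omega),
      if_neg (show ¬(b = b ∧ a < b) by omega),
      if_pos (show b = b ∧ b < a by omega),
      if_neg (show ¬(a = b ∧ a < b) by omega),
      if_neg (show ¬(a = b ∧ a < b) by omega),
      if_neg (show ¬(a = b ∧ b = b) by omega)]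
    rw [show (min a (min b b) : ℕ) = b by omega]
    simp only [add_zero, zero_add]
    simp only [← EE_mul, ← EE_key]
    all_goals ring
  · exact absurd h3 (by omega)
  · exact absurd h3 (by omega)
  · skip
    rw [if_neg (show ¬(b < a ∧ c < b) by omega),
      if_pos (show c < a ∧ b < c by omega),
      if_neg (show ¬(a < b ∧ c < a) by omega),
      if_neg (show ¬(c < b ∧ a < c) by omega),
      if_neg (show ¬(a < c ∧ b < a) by omega),
      if_neg (show ¬(b < c ∧ a < b) by omega),
      if_neg (show ¬(a = b ∧ c < a) by omega),
      if_neg (show ¬(a = c ∧ b < a) by omega),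
      if_neg (show ¬(b = c ∧ a < b) by omega),
      if_neg (show ¬(b = c ∧ b < a) by omega),
      if_neg (show ¬(a = c ∧ a < b) by omega),
      if_neg (show ¬(a = b ∧ a < c) by omega),
      if_neg (show ¬(a = b ∧ b = c) by omega)]
    rw [show (min a (min b c) : ℕ) = b by omega]
    simp only [add_zero, zero_add]
    simp only [← EE_mul, ← EE_key]
    all_goals ring
  · rw [h3]
    rw [if_neg (show ¬(b < a ∧ a < b) by omega),
      if_neg (show ¬(a < a ∧ b < a) by omega),
      if_neg (show ¬(a < b ∧ a < a) by omega),
      if_neg (show ¬(a < b ∧ a < a) by omega),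
      if_neg (show ¬(a < a ∧ b < a) by omega),
      if_neg (show ¬(b < a ∧ a < b) by omega),
      if_neg (show ¬(a = b ∧ a < a) by omega),
      if_pos (show a = a ∧ b < a by omega),
      if_neg (show ¬(b = a ∧ a < b) by omega),
      if_neg (show ¬(b = a ∧ b < a) by omega),
      if_neg (show ¬(a = a ∧ a < b) by omega),
      if_neg (show ¬(a = b ∧ a < a) by omega),
      if_neg (show ¬(a = b ∧ b = a) by omega)]
    rw [show (min a (min b a) : ℕ) = b by omega]
    simp only [add_zero, zero_add]
    simp only [← EE_mul, ← EE_key]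
    all_goals ring
  · skip
    rw [if_neg (show ¬(b < a ∧ c < b) by omega),
      if_neg (show ¬(c < a ∧ b < c) by omega),
      if_neg (show ¬(a < b ∧ c < a) by omega),
      if_neg (show ¬(c < b ∧ a < c) by omega),
      if_pos (show a < c ∧ b < a by omega),
      if_neg (show ¬(b < c ∧ a < b) by omega),
      if_neg (show ¬(a = b ∧ c < a) by omega),
      if_neg (show ¬(a = c ∧ b < a) by omega),
      if_neg (show ¬(b = c ∧ a < b) by omega),
      if_neg (show ¬(b = c ∧ b < a) by omega),
      if_neg (show ¬(a = c ∧ a < b) by omega),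
      if_neg (show ¬(a = b ∧ a < c) by omega),
      if_neg (show ¬(a = b ∧ b = c) by omega)]
    rw [show (min a (min b c) : ℕ) = b by omega]
    simp only [add_zero, zero_add]
    simp only [← EE_mul, ← EE_key]
    all_goals ring
  · rw [h1]
    rw [if_neg (show ¬(a < a ∧ c < a) by omega),
      if_neg (show ¬(c < a ∧ a < c) by omega),
      if_neg (show ¬(a < a ∧ c < a) by omega),
      if_neg (show ¬(c < a ∧ a < c) by omega),
      if_neg (show ¬(a < c ∧ a < a) by omega),
      if_neg (show ¬(a < c ∧ a < a) by omega),
      if_pos (show a = a ∧ c < a by omega),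
      if_neg (show ¬(a = c ∧ a < a) by omega),
      if_neg (show ¬(a = c ∧ a < a) by omega),
      if_neg (show ¬(a = c ∧ a < a) by omega),
      if_neg (show ¬(a = c ∧ a < a) by omega),
      if_neg (show ¬(a = a ∧ a < c) by omega),
      if_neg (show ¬(a = a ∧ a = c) by omega)]
    rw [show (min a (min a c) : ℕ) = c by omega]
    simp only [add_zero, zero_add]
    simp only [← EE_mul, ← EE_key]
    all_goals ring
  · exact absurd h3 (by omega)
  · exact absurd h3 (by omega)
  · exact absurd h3 (by omega)
  · rw [h2, h1]
    rw [if_neg (show ¬(a < a ∧ a < a) by omega),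
      if_neg (show ¬(a < a ∧ a < a) by omega),
      if_neg (show ¬(a < a ∧ a < a) by omega),
      if_neg (show ¬(a < a ∧ a < a) by omega),
      if_neg (show ¬(a < a ∧ a < a) by omega),
      if_neg (show ¬(a < a ∧ a < a) by omega),
      if_neg (show ¬(a = a ∧ a < a) by omega),
      if_neg (show ¬(a = a ∧ a < a) by omega),
      if_neg (show ¬(a = a ∧ a < a) by omega),
      if_neg (show ¬(a = a ∧ a < a) by omega),
      if_neg (show ¬(a = a ∧ a < a) by omega),
      if_neg (show ¬(a = a ∧ a < a) by omega),
      if_pos (show a = a ∧ a = a by omega)]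
    rw [show (min a (min a a) : ℕ) = a by omega]
    simp only [add_zero, zero_add]
    simp only [← EE_mul, ← EE_key]
    all_goals ring
  · exact absurd h3 (by omega)
  · exact absurd h3 (by omega)
  · exact absurd h3 (by omega)
  · rw [h1]
    rw [if_neg (show ¬(a < a ∧ c < a) by omega),
      if_neg (show ¬(c < a ∧ a < c) by omega),
      if_neg (show ¬(a < a ∧ c < a) by omega),
      if_neg (show ¬(c < a ∧ a < c) by omega),
      if_neg (show ¬(a < c ∧ a < a) by omega),
      if_neg (show ¬(a < c ∧ a < a) by omega),
      if_neg (show ¬(a = a ∧ c < a) by omega),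
      if_neg (show ¬(a = c ∧ a < a) by omega),
      if_neg (show ¬(a = c ∧ a < a) by omega),
      if_neg (show ¬(a = c ∧ a < a) by omega),
      if_neg (show ¬(a = c ∧ a < a) by omega),
      if_pos (show a = a ∧ a < c by omega),
      if_neg (show ¬(a = a ∧ a = c) by omega)]
    rw [show (min a (min a c) : ℕ) = a by omega]
    simp only [add_zero, zero_add]
    simp only [← EE_mul, ← EE_key]
    all_goals ring
  · skip
    rw [if_neg (show ¬(b < a ∧ c < b) by omega),
      if_neg (show ¬(c < a ∧ b < c) by omega),
      if_pos (show a < b ∧ c < a by omega),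
      if_neg (show ¬(c < b ∧ a < c) by omega),
      if_neg (show ¬(a < c ∧ b < a) by omega),
      if_neg (show ¬(b < c ∧ a < b) by omega),
      if_neg (show ¬(a = b ∧ c < a) by omega),
      if_neg (show ¬(a = c ∧ b < a) by omega),
      if_neg (show ¬(b = c ∧ a < b) by omega),
      if_neg (show ¬(b = c ∧ b < a) by omega),
      if_neg (show ¬(a = c ∧ a < b) by omega),
      if_neg (show ¬(a = b ∧ a < c) by omega),
      if_neg (show ¬(a = b ∧ b = c) by omega)]
    rw [show (min a (min b c) : ℕ) = c by omega]
    simp only [add_zero, zero_add]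
    simp only [← EE_mul, ← EE_key]
    all_goals ring
  · rw [h3]
    rw [if_neg (show ¬(b < a ∧ a < b) by omega),
      if_neg (show ¬(a < a ∧ b < a) by omega),
      if_neg (show ¬(a < b ∧ a < a) by omega),
      if_neg (show ¬(a < b ∧ a < a) by omega),
      if_neg (show ¬(a < a ∧ b < a) by omega),
      if_neg (show ¬(b < a ∧ a < b) by omega),
      if_neg (show ¬(a = b ∧ a < a) by omega),
      if_neg (show ¬(a = a ∧ b < a) by omega),
      if_neg (show ¬(b = a ∧ a < b) by omega),
      if_neg (show ¬(b = a ∧ b < a) by omega),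
      if_pos (show a = a ∧ a < b by omega),
      if_neg (show ¬(a = b ∧ a < a) by omega),
      if_neg (show ¬(a = b ∧ b = a) by omega)]
    rw [show (min a (min b a) : ℕ) = a by omega]
    simp only [add_zero, zero_add]
    simp only [← EE_mul, ← EE_key]
    all_goals ring
  · skip
    rw [if_neg (show ¬(b < a ∧ c < b) by omega),
      if_neg (show ¬(c < a ∧ b < c) by omega),
      if_neg (show ¬(a < b ∧ c < a) by omega),
      if_pos (show c < b ∧ a < c by omega),
      if_neg (show ¬(a < c ∧ b < a) by omega),
      if_neg (show ¬(b < c ∧ a < b) by omega),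
      if_neg (show ¬(a = b ∧ c < a) by omega),
      if_neg (show ¬(a = c ∧ b < a) by omega),
      if_neg (show ¬(b = c ∧ a < b) by omega),
      if_neg (show ¬(b = c ∧ b < a) by omega),
      if_neg (show ¬(a = c ∧ a < b) by omega),
      if_neg (show ¬(a = b ∧ a < c) by omega),
      if_neg (show ¬(a = b ∧ b = c) by omega)]
    rw [show (min a (min b c) : ℕ) = a by omega]
    simp only [add_zero, zero_add]
    simp only [← EE_mul, ← EE_key]
    all_goals ring
  · exact absurd h3 (by omega)
  · exact absurd h3 (by omega)
  · rw [h2]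
    rw [if_neg (show ¬(b < a ∧ b < b) by omega),
      if_neg (show ¬(b < a ∧ b < b) by omega),
      if_neg (show ¬(a < b ∧ b < a) by omega),
      if_neg (show ¬(b < b ∧ a < b) by omega),
      if_neg (show ¬(a < b ∧ b < a) by omega),
      if_neg (show ¬(b < b ∧ a < b) by omega),
      if_neg (show ¬(a = b ∧ b < a) by omega),
      if_neg (show ¬(a = b ∧ b < a) by omega),
      if_pos (show b = b ∧ a < b by omega),
      if_neg (show ¬(b = b ∧ b < a) by omega),
      if_neg (show ¬(a = b ∧ a < b) by omega),
      if_neg (show ¬(a = b ∧ a < b) by omega),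
      if_neg (show ¬(a = b ∧ b = b) by omega)]
    rw [show (min a (min b b) : ℕ) = a by omega]
    simp only [add_zero, zero_add]
    simp only [← EE_mul, ← EE_key]
    all_goals ring
  · exact absurd h3 (by omega)
  · exact absurd h3 (by omega)
  · skip
    rw [if_neg (show ¬(b < a ∧ c < b) by omega),
      if_neg (show ¬(c < a ∧ b < c) by omega),
      if_neg (show ¬(a < b ∧ c < a) by omega),
      if_neg (show ¬(c < b ∧ a < c) by omega),
      if_neg (show ¬(a < c ∧ b < a) by omega),
      if_pos (show b < c ∧ a < b by omega),
      if_neg (show ¬(a = b ∧ c < a) by omega),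
      if_neg (show ¬(a = c ∧ b < a) by omega),
      if_neg (show ¬(b = c ∧ a < b) by omega),
      if_neg (show ¬(b = c ∧ b < a) by omega),
      if_neg (show ¬(a = c ∧ a < b) by omega),
      if_neg (show ¬(a = b ∧ a < c) by omega),
      if_neg (show ¬(a = b ∧ b = c) by omega)]
    rw [show (min a (min b c) : ℕ) = a by omega]
    simp only [add_zero, zero_add]
    simp only [← EE_mul, ← EE_key]
    all_goals ring

lemma reg1 (p q r : ℝ) :
    (∑' x : ℕ × ℕ × ℕ, if x.2.1 < x.1 ∧ x.2.2 < x.2.1 then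
      EE p x.1 * EE q x.2.1 * EE (r-1) x.2.2 else 0) = Z3E p q (r-1) := rfl

def perm2 : ℕ × ℕ × ℕ ≃ ℕ × ℕ × ℕ :=
  ⟨fun x => (x.1, x.2.2, x.2.1), fun x => (x.1, x.2.2, x.2.1), fun _ => rfl, fun _ => rfl⟩
def perm3 : ℕ × ℕ × ℕ ≃ ℕ × ℕ × ℕ :=
  ⟨fun x => (x.2.1, x.1, x.2.2), fun x => (x.2.1, x.1, x.2.2), fun _ => rfl, fun _ => rfl⟩
def perm4 : ℕ × ℕ × ℕ ≃ ℕ × ℕ × ℕ :=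
  ⟨fun x => (x.2.1, x.2.2, x.1), fun x => (x.2.2, x.1, x.2.1), fun _ => rfl, fun _ => rfl⟩
def perm5 : ℕ × ℕ × ℕ ≃ ℕ × ℕ × ℕ :=
  ⟨fun x => (x.2.2, x.1, x.2.1), fun x => (x.2.1, x.2.2, x.1), fun _ => rfl, fun _ => rfl⟩
def perm6 : ℕ × ℕ × ℕ ≃ ℕ × ℕ × ℕ :=
  ⟨fun x => (x.2.2, x.2.1, x.1), fun x => (x.2.2, x.2.1, x.1), fun _ => rfl, fun _ => rfl⟩

lemma reg2 (p q r : ℝ) :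
    (∑' x : ℕ × ℕ × ℕ, if x.2.2 < x.1 ∧ x.2.1 < x.2.2 then
      EE p x.1 * EE r x.2.2 * EE (q-1) x.2.1 else 0) = Z3E p r (q-1) := by
  refine Eq.trans ?_ (Equiv.tsum_eq perm2 (fun y : ℕ × ℕ × ℕ =>
    if y.2.1 < y.1 ∧ y.2.2 < y.2.1 then EE p y.1 * EE r y.2.1 * EE (q-1) y.2.2 else 0))
  exact tsum_congr fun x => rfl

lemma reg3 (p q r : ℝ) :
    (∑' x : ℕ × ℕ × ℕ, if x.1 < x.2.1 ∧ x.2.2 < x.1 then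
      EE q x.2.1 * EE p x.1 * EE (r-1) x.2.2 else 0) = Z3E q p (r-1) := by
  refine Eq.trans ?_ (Equiv.tsum_eq perm3 (fun y : ℕ × ℕ × ℕ =>
    if y.2.1 < y.1 ∧ y.2.2 < y.2.1 then EE q y.1 * EE p y.2.1 * EE (r-1) y.2.2 else 0))
  exact tsum_congr fun x => rfl

lemma reg4 (p q r : ℝ) :
    (∑' x : ℕ × ℕ × ℕ, if x.2.2 < x.2.1 ∧ x.1 < x.2.2 then
      EE q x.2.1 * EE r x.2.2 * EE (p-1) x.1 else 0) = Z3E q r (p-1) := by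
  refine Eq.trans ?_ (Equiv.tsum_eq perm4 (fun y : ℕ × ℕ × ℕ =>
    if y.2.1 < y.1 ∧ y.2.2 < y.2.1 then EE q y.1 * EE r y.2.1 * EE (p-1) y.2.2 else 0))
  exact tsum_congr fun x => rfl

lemma reg5 (p q r : ℝ) :
    (∑' x : ℕ × ℕ × ℕ, if x.1 < x.2.2 ∧ x.2.1 < x.1 then
      EE r x.2.2 * EE p x.1 * EE (q-1) x.2.1 else 0) = Z3E r p (q-1) := by
  refine Eq.trans ?_ (Equiv.tsum_eq perm5 (fun y : ℕ × ℕ × ℕ =>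
    if y.2.1 < y.1 ∧ y.2.2 < y.2.1 then EE r y.1 * EE p y.2.1 * EE (q-1) y.2.2 else 0))
  exact tsum_congr fun x => rfl

lemma reg6 (p q r : ℝ) :
    (∑' x : ℕ × ℕ × ℕ, if x.2.1 < x.2.2 ∧ x.1 < x.2.1 then
      EE r x.2.2 * EE q x.2.1 * EE (p-1) x.1 else 0) = Z3E r q (p-1) := by
  refine Eq.trans ?_ (Equiv.tsum_eq perm6 (fun y : ℕ × ℕ × ℕ =>
    if y.2.1 < y.1 ∧ y.2.2 < y.2.1 then EE r y.1 * EE q y.2.1 * EE (p-1) y.2.2 else 0))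
  exact tsum_congr fun x => rfl

lemma pairreg (A B : ℝ) (j : ℕ × ℕ → ℕ × ℕ × ℕ) (hinj : Function.Injective j)
    (P : ℕ × ℕ × ℕ → Prop) [DecidablePred P] (V : ℕ × ℕ × ℕ → ENNReal)
    (hPj : ∀ z : ℕ × ℕ, P (j z) ↔ z.2 < z.1)
    (hVj : ∀ z : ℕ × ℕ, V (j z) = EE A z.1 * EE B z.2)
    (hsupp : ∀ y, P y → y ∈ Set.range j) :
    (∑' x : ℕ × ℕ × ℕ, if P x then V x else 0) = Z2E A B := by
  have step : (∑' z : ℕ × ℕ, if P (j z) then V (j z) else 0)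
      = ∑' x : ℕ × ℕ × ℕ, if P x then V x else 0 := by
    refine Function.Injective.tsum_eq (f := fun x => if P x then V x else 0) hinj ?_
    intro y hy
    have hc : P y := by
      by_contra hcon
      exact hy (if_neg hcon)
    exact hsupp y hc
  rw [← step, Z2E]
  exact tsum_congr fun z => by
    by_cases h : z.2 < z.1
    · rw [if_pos ((hPj z).mpr h), if_pos h, hVj]
    · rw [if_neg (fun hh => h ((hPj z).mp hh)), if_neg h]


lemma reg7 (p q r : ℝ) :
    (∑' x : ℕ × ℕ × ℕ, if x.1 = x.2.1 ∧ x.2.2 < x.1 then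
      EE (p+q) x.1 * EE (r-1) x.2.2 else 0) = Z2E (p+q) (r-1) := by
  refine pairreg (p+q) (r-1) (fun z => (z.1, z.1, z.2))
    (by intro z w h; dsimp only at h; simp only [Prod.ext_iff] at h ⊢; omega)
    (P := fun x => x.1 = x.2.1 ∧ x.2.2 < x.1)
    (V := fun x => EE (p+q) x.1 * EE (r-1) x.2.2)
    (fun z => by dsimp only; omega)
    (fun z => rfl)
    (fun y hy => ⟨(y.1, y.2.2), by obtain ⟨h1, h2⟩ := hy; dsimp only; simp only [Prod.ext_iff, true_and, and_true]; omega⟩)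

lemma reg8 (p q r : ℝ) :
    (∑' x : ℕ × ℕ × ℕ, if x.1 = x.2.2 ∧ x.2.1 < x.1 then
      EE (p+r) x.1 * EE (q-1) x.2.1 else 0) = Z2E (p+r) (q-1) := by
  refine pairreg (p+r) (q-1) (fun z => (z.1, z.2, z.1))
    (by intro z w h; dsimp only at h; simp only [Prod.ext_iff] at h ⊢; omega)
    (P := fun x => x.1 = x.2.2 ∧ x.2.1 < x.1)
    (V := fun x => EE (p+r) x.1 * EE (q-1) x.2.1)
    (fun z => by dsimp only; omega)
    (fun z => rfl)
    (fun y hy => ⟨(y.1, y.2.1), by obtain ⟨h1, h2⟩ := hy; dsimp only; simp only [Prod.ext_iff, true_and, and_true]; omega⟩)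

lemma reg9 (p q r : ℝ) :
    (∑' x : ℕ × ℕ × ℕ, if x.2.1 = x.2.2 ∧ x.1 < x.2.1 then
      EE (q+r) x.2.1 * EE (p-1) x.1 else 0) = Z2E (q+r) (p-1) := by
  refine pairreg (q+r) (p-1) (fun z => (z.2, z.1, z.1))
    (by intro z w h; dsimp only at h; simp only [Prod.ext_iff] at h ⊢; omega)
    (P := fun x => x.2.1 = x.2.2 ∧ x.1 < x.2.1)
    (V := fun x => EE (q+r) x.2.1 * EE (p-1) x.1)
    (fun z => by dsimp only; omega)
    (fun z => rfl)
    (fun y hy => ⟨(y.2.1, y.1), by obtain ⟨h1, h2⟩ := hy; dsimp only; simp only [Prod.ext_iff, true_and, and_true]; omega⟩)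

lemma reg10 (p q r : ℝ) :
    (∑' x : ℕ × ℕ × ℕ, if x.2.1 = x.2.2 ∧ x.2.1 < x.1 then
      EE p x.1 * EE (q+r-1) x.2.1 else 0) = Z2E p (q+r-1) := by
  refine pairreg p (q+r-1) (fun z => (z.1, z.2, z.2))
    (by intro z w h; dsimp only at h; simp only [Prod.ext_iff] at h ⊢; omega)
    (P := fun x => x.2.1 = x.2.2 ∧ x.2.1 < x.1)
    (V := fun x => EE p x.1 * EE (q+r-1) x.2.1)
    (fun z => by dsimp only; omega)
    (fun z => rfl)
    (fun y hy => ⟨(y.1, y.2.1), by obtain ⟨h1, h2⟩ := hy; dsimp only; simp only [Prod.ext_iff, true_and, and_true]; omega⟩)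

lemma reg11 (p q r : ℝ) :
    (∑' x : ℕ × ℕ × ℕ, if x.1 = x.2.2 ∧ x.1 < x.2.1 then
      EE q x.2.1 * EE (p+r-1) x.1 else 0) = Z2E q (p+r-1) := by
  refine pairreg q (p+r-1) (fun z => (z.2, z.1, z.2))
    (by intro z w h; dsimp only at h; simp only [Prod.ext_iff] at h ⊢; omega)
    (P := fun x => x.1 = x.2.2 ∧ x.1 < x.2.1)
    (V := fun x => EE q x.2.1 * EE (p+r-1) x.1)
    (fun z => by dsimp only; omega)
    (fun z => rfl)
    (fun y hy => ⟨(y.2.1, y.1), by obtain ⟨h1, h2⟩ := hy; dsimp only; simp only [Prod.ext_iff, true_and, and_true]; omega⟩)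

lemma reg12 (p q r : ℝ) :
    (∑' x : ℕ × ℕ × ℕ, if x.1 = x.2.1 ∧ x.1 < x.2.2 then
      EE r x.2.2 * EE (p+q-1) x.1 else 0) = Z2E r (p+q-1) := by
  refine pairreg r (p+q-1) (fun z => (z.2, z.2, z.1))
    (by intro z w h; dsimp only at h; simp only [Prod.ext_iff] at h ⊢; omega)
    (P := fun x => x.1 = x.2.1 ∧ x.1 < x.2.2)
    (V := fun x => EE r x.2.2 * EE (p+q-1) x.1)
    (fun z => by dsimp only; omega)
    (fun z => rfl)
    (fun y hy => ⟨(y.2.2, y.1), by obtain ⟨h1, h2⟩ := hy; dsimp only; simp only [Prod.ext_iff, true_and, and_true]; omega⟩)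

lemma reg13 (p q r : ℝ) :
    (∑' x : ℕ × ℕ × ℕ, if x.1 = x.2.1 ∧ x.2.1 = x.2.2 then
      EE (p+q+r-1) x.1 else 0) = ∑' n : ℕ, EE (p+q+r-1) n := by
  classical
  have hinj : Function.Injective (fun n : ℕ => ((n, n, n) : ℕ × ℕ × ℕ)) := by
    intro x y h
    simp only [Prod.ext_iff] at h
    omega
  have step := Function.Injective.tsum_eq
    (f := fun x : ℕ × ℕ × ℕ => if x.1 = x.2.1 ∧ x.2.1 = x.2.2 then EE (p+q+r-1) x.1 else 0)
    hinj
    (by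
      intro y hy
      have hc : y.1 = y.2.1 ∧ y.2.1 = y.2.2 := by
        by_contra hcon
        exact hy (if_neg hcon)
      exact ⟨y.1, by obtain ⟨h1, h2⟩ := hc; dsimp only; simp only [Prod.ext_iff, true_and, and_true]; omega⟩)
  rw [← step]
  exact tsum_congr fun n => by simp

lemma M_split (p q r : ℝ) :
    (∑' x : ℕ × ℕ × ℕ, (((min x.1 (min x.2.1 x.2.2) : ℕ) : ENNReal) + 1)
        * (EE p x.1 * EE q x.2.1 * EE r x.2.2))
    = Z3E p q (r-1) + Z3E p r (q-1) + Z3E q p (r-1) + Z3E q r (p-1)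
      + Z3E r p (q-1) + Z3E r q (p-1)
      + Z2E (p+q) (r-1) + Z2E (p+r) (q-1) + Z2E (q+r) (p-1)
      + Z2E p (q+r-1) + Z2E q (p+r-1) + Z2E r (p+q-1)
      + (∑' n : ℕ, EE (p+q+r-1) n) := by
  rw [tsum_congr (fun x : ℕ × ℕ × ℕ => pointwise p q r x.1 x.2.1 x.2.2)]
  simp only [ENNReal.tsum_add]
  rw [reg1 p q r, reg2 p q r, reg3 p q r, reg4 p q r, reg5 p q r, reg6 p q r,
    reg7 p q r, reg8 p q r, reg9 p q r, reg10 p q r, reg11 p q r, reg12 p q r, reg13 p q r]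

lemma M_ne_top (p q r : ℝ) (hp : 1 < p) (hq : 1 < q) (hr : 1 < r)
    (hsum : 4 < p + q + r) :
    (∑' x : ℕ × ℕ × ℕ, (((min x.1 (min x.2.1 x.2.2) : ℕ) : ENNReal) + 1)
        * (EE p x.1 * EE q x.2.1 * EE r x.2.2)) ≠ ⊤ := by
  have hne : p + q + r - 3 > 0 := by linarith
  set t : ℝ := (p + q + r - 3)⁻¹ with ht
  have htpos : 0 < t := inv_pos.mpr hne
  have ht1 : t < 1 := by
    rw [ht]
    rw [inv_lt_one_iff₀]
    right; linarith
  set α := (p-1)*t with hα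
  set β := (q-1)*t with hβ
  set γ := (r-1)*t with hγ
  have hα0 : 0 ≤ α := mul_nonneg (by linarith) htpos.le
  have hβ0 : 0 ≤ β := mul_nonneg (by linarith) htpos.le
  have hγ0 : 0 ≤ γ := mul_nonneg (by linarith) htpos.le
  have hsum1 : α + β + γ = 1 := by
    rw [hα, hβ, hγ, ht]
    field_simp
    ring
  have hpα : 1 < p - α := by
    have : α < p - 1 := by
      rw [hα]
      calc (p-1)*t < (p-1)*1 := by
            exact mul_lt_mul_of_pos_left ht1 (by linarith)
        _ = p - 1 := mul_one _
    linarith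
  have hqβ : 1 < q - β := by
    have : β < q - 1 := by
      rw [hβ]
      calc (q-1)*t < (q-1)*1 := mul_lt_mul_of_pos_left ht1 (by linarith)
        _ = q - 1 := mul_one _
    linarith
  have hrγ : 1 < r - γ := by
    have : γ < r - 1 := by
      rw [hγ]
      calc (r-1)*t < (r-1)*1 := mul_lt_mul_of_pos_left ht1 (by linarith)
        _ = r - 1 := mul_one _
    linarith
  have key : ∀ x : ℕ × ℕ × ℕ,
      (((min x.1 (min x.2.1 x.2.2) : ℕ) : ENNReal) + 1)
        * (EE p x.1 * EE q x.2.1 * EE r x.2.2)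
      ≤ EE (p-α) x.1 * EE (q-β) x.2.1 * EE (r-γ) x.2.2 := by
    rintro ⟨a, b, c⟩
    dsimp only
    set μ : ℕ := min a (min b c) with hμ
    have hcast : ((μ : ℕ) : ENNReal) + 1 = ENNReal.ofReal ((μ : ℝ) + 1) := by
      rw [ENNReal.ofReal_add (by positivity) zero_le_one, ENNReal.ofReal_natCast,
        ENNReal.ofReal_one]
    have hreal : (μ : ℝ) + 1 ≤ ((a:ℝ)+1)^α * ((b:ℝ)+1)^β * ((c:ℝ)+1)^γ := by
      have h1 : (μ:ℝ) + 1 = ((μ:ℝ)+1)^α * ((μ:ℝ)+1)^β * ((μ:ℝ)+1)^γ := by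
        rw [← Real.rpow_add (by positivity), ← Real.rpow_add (by positivity), hsum1,
          Real.rpow_one]
      rw [h1]
      have ha' : (μ:ℝ) + 1 ≤ (a:ℝ) + 1 := by
        have : μ ≤ a := min_le_left _ _
        exact_mod_cast by exact_mod_cast add_le_add_left (Nat.cast_le.mpr this) 1
      have hb' : (μ:ℝ) + 1 ≤ (b:ℝ) + 1 := by
        have : μ ≤ b := le_trans (min_le_right _ _) (min_le_left _ _)
        exact add_le_add_left (Nat.cast_le.mpr this) 1
      have hc' : (μ:ℝ) + 1 ≤ (c:ℝ) + 1 := by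
        have : μ ≤ c := le_trans (min_le_right _ _) (min_le_right _ _)
        exact add_le_add_left (Nat.cast_le.mpr this) 1
      gcongr <;> positivity
    calc ((μ : ENNReal) + 1) * (EE p a * EE q b * EE r c)
        ≤ ENNReal.ofReal (((a:ℝ)+1)^α * ((b:ℝ)+1)^β * ((c:ℝ)+1)^γ)
            * (EE p a * EE q b * EE r c) := by
          refine mul_le_mul_left ?_ _
          rw [hcast]
          exact ENNReal.ofReal_le_ofReal hreal
      _ = EE (p-α) a * EE (q-β) b * EE (r-γ) c := by
          rw [ENNReal.ofReal_mul (by positivity), ENNReal.ofReal_mul (by positivity)]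
          rw [← EE_shift p α a, ← EE_shift q β b, ← EE_shift r γ c]
          ring
  have hle := ENNReal.tsum_le_tsum key
  rw [← tsum3] at hle
  exact ne_top_of_le_ne_top
    (ENNReal.mul_ne_top (ENNReal.mul_ne_top (Z1E_ne_top hpα) (Z1E_ne_top hqβ))
      (Z1E_ne_top hrγ)) hle

theorem stmt14 (p q r : ℝ) (hp : 1 < p) (hq : 1 < q) (hr : 1 < r)
    (hsum : 4 < p + q + r) :
    ∑' n : ℕ, zetaTail p (n + 1) * zetaTail q (n + 1) * zetaTail r (n + 1) =
      zeta3 p q (r - 1) + zeta3 p r (q - 1) + zeta3 q p (r - 1) + zeta3 q r (p - 1) +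
        zeta3 r p (q - 1) + zeta3 r q (p - 1) +
        zeta2 (p + q) (r - 1) + zeta2 (p + r) (q - 1) + zeta2 (q + r) (p - 1) +
        zeta2 p (q + r - 1) + zeta2 q (p + r - 1) + zeta2 r (p + q - 1) +
        rzeta (p + q + r - 1) - rzeta p * rzeta q * rzeta r := by
  classical
  -- ENNReal master identity
  have master :
      (∑' n : ℕ, ∑' x : ℕ × ℕ × ℕ,
          EE p (x.1 + (n+1)) * EE q (x.2.1 + (n+1)) * EE r (x.2.2 + (n+1)))
        + (∑' n : ℕ, EE p n) * (∑' n : ℕ, EE q n) * (∑' n : ℕ, EE r n)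
      = ∑' x : ℕ × ℕ × ℕ, (((min x.1 (min x.2.1 x.2.2) : ℕ) : ENNReal) + 1)
          * (EE p x.1 * EE q x.2.1 * EE r x.2.2) := by
    rw [Lambda_eq, tsum3, ← ENNReal.tsum_add]
    exact tsum_congr fun x => by ring
  have master2 := master.trans (M_split p q r)
  have hM := M_ne_top p q r hp hq hr hsum
  have hT : (Z3E p q (r-1) + Z3E p r (q-1) + Z3E q p (r-1) + Z3E q r (p-1)
      + Z3E r p (q-1) + Z3E r q (p-1)
      + Z2E (p+q) (r-1) + Z2E (p+r) (q-1) + Z2E (q+r) (p-1)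
      + Z2E p (q+r-1) + Z2E q (p+r-1) + Z2E r (p+q-1)
      + (∑' n : ℕ, EE (p+q+r-1) n)) ≠ ⊤ := by
    rw [← M_split p q r]; exact hM
  have hΛZ : (∑' n : ℕ, ∑' x : ℕ × ℕ × ℕ,
      EE p (x.1 + (n+1)) * EE q (x.2.1 + (n+1)) * EE r (x.2.2 + (n+1)))
        + (∑' n : ℕ, EE p n) * (∑' n : ℕ, EE q n) * (∑' n : ℕ, EE r n) ≠ ⊤ := by
    rw [master2]; exact hT
  simp only [ENNReal.add_ne_top] at hT hΛZ
  obtain ⟨⟨⟨⟨⟨⟨⟨⟨⟨⟨⟨⟨ht1, ht2⟩, ht3⟩, ht4⟩, ht5⟩, ht6⟩, ht7⟩, ht8⟩, ht9⟩, ht10⟩,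
    ht11⟩, ht12⟩, ht13⟩ := hT
  obtain ⟨hΛ, hZ⟩ := hΛZ
  -- LHS real value
  have hInner : ∀ n : ℕ,
      ENNReal.ofReal (zetaTail p (n+1) * zetaTail q (n+1) * zetaTail r (n+1))
      = ∑' x : ℕ × ℕ × ℕ,
          EE p (x.1 + (n+1)) * EE q (x.2.1 + (n+1)) * EE r (x.2.2 + (n+1)) := by
    intro n
    rw [ENNReal.ofReal_mul (mul_nonneg (zetaTail_nonneg hp _) (zetaTail_nonneg hq _)),
      ENNReal.ofReal_mul (zetaTail_nonneg hp _),
      ofReal_zetaTail hp, ofReal_zetaTail hq, ofReal_zetaTail hr, tsum3]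
  have hLHS : (∑' n : ℕ, zetaTail p (n + 1) * zetaTail q (n + 1) * zetaTail r (n + 1))
      = (∑' n : ℕ, ∑' x : ℕ × ℕ × ℕ,
          EE p (x.1 + (n+1)) * EE q (x.2.1 + (n+1)) * EE r (x.2.2 + (n+1))).toReal := by
    rw [ENNReal.tsum_toReal_eq (fun n => by rw [← hInner n]; exact ENNReal.ofReal_ne_top)]
    refine tsum_congr fun n => ?_
    rw [← hInner n, ENNReal.toReal_ofReal
      (mul_nonneg (mul_nonneg (zetaTail_nonneg hp _) (zetaTail_nonneg hq _))
        (zetaTail_nonneg hr _))]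
  -- partial sums finite
  have P2 := ENNReal.add_ne_top.mpr ⟨ht1, ht2⟩
  have P3 := ENNReal.add_ne_top.mpr ⟨P2, ht3⟩
  have P4 := ENNReal.add_ne_top.mpr ⟨P3, ht4⟩
  have P5 := ENNReal.add_ne_top.mpr ⟨P4, ht5⟩
  have P6 := ENNReal.add_ne_top.mpr ⟨P5, ht6⟩
  have P7 := ENNReal.add_ne_top.mpr ⟨P6, ht7⟩
  have P8 := ENNReal.add_ne_top.mpr ⟨P7, ht8⟩
  have P9 := ENNReal.add_ne_top.mpr ⟨P8, ht9⟩
  have P10 := ENNReal.add_ne_top.mpr ⟨P9, ht10⟩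
  have P11 := ENNReal.add_ne_top.mpr ⟨P10, ht11⟩
  have P12 := ENNReal.add_ne_top.mpr ⟨P11, ht12⟩
  have treal := congrArg ENNReal.toReal master2
  rw [ENNReal.toReal_add hΛ hZ, ENNReal.toReal_add P12 ht13, ENNReal.toReal_add P11 ht12,
    ENNReal.toReal_add P10 ht11, ENNReal.toReal_add P9 ht10, ENNReal.toReal_add P8 ht9,
    ENNReal.toReal_add P7 ht8, ENNReal.toReal_add P6 ht7, ENNReal.toReal_add P5 ht6,
    ENNReal.toReal_add P4 ht5, ENNReal.toReal_add P3 ht4, ENNReal.toReal_add P2 ht3,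
    ENNReal.toReal_add ht1 ht2, ENNReal.toReal_mul, ENNReal.toReal_mul] at treal
  rw [hLHS, zeta3_eq p q (r-1), zeta3_eq p r (q-1), zeta3_eq q p (r-1), zeta3_eq q r (p-1),
    zeta3_eq r p (q-1), zeta3_eq r q (p-1), zeta2_eq (p+q) (r-1), zeta2_eq (p+r) (q-1),
    zeta2_eq (q+r) (p-1), zeta2_eq p (q+r-1), zeta2_eq q (p+r-1), zeta2_eq r (p+q-1),
    rzeta_eq (p+q+r-1), rzeta_eq p, rzeta_eq q, rzeta_eq r]
  linarith [treal]
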